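/- Let V be a finite set, let E ⊆ V × V be a set of directed edges, and let s ≠ t be vertices of V. Suppose P_1, …, P_k are pairwise edge-disjoint directed paths from s to t in (V, E), each of which visits every vertex at most once. Define f : V × V → ℕ by f(u, v) = 1 if (u, v) is an edge of some P_m and f(u, v) = 0 otherwise. Then f satisfies f(u, v) = 0 whenever (u, v) ∉ E, f(u, v) ≤ 1 everywhere, flow conservation Σ_{u} f(u, v) = Σ_{w} f(v, w) at every vertex v ∉ {s, t}, and its value satisfies Σ_{v} f(s, v) − Σ_{v} f(v, s) = k. -/

import Mathlib

open scoped Classical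

/-- A directed path in the graph with edge set `E`: a nonempty list of vertices
whose consecutive pairs are edges. -/
def IsPath {V : Type*} (E : Set (V × V)) (p : List V) : Prop :=
  p ≠ [] ∧ List.Chain' (fun u w => (u, w) ∈ E) p

/-- The edges of a path, i.e. the consecutive pairs of vertices. -/
def pathEdges {V : Type*} (p : List V) : List (V × V) :=
  p.zip p.tail

/-- A directed path from `s` to `t`. -/
def IsPathFromTo {V : Type*} (E : Set (V × V)) (p : List V) (s t : V) : Prop :=
  IsPath E p ∧ p.head? = some s ∧ p.getLast? = some t

/-- Two paths are edge-disjoint: no pair of consecutive vertices occurs as an edge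
of both. -/
def EdgeDisjoint {V : Type*} (p q : List V) : Prop :=
  ∀ e : V × V, e ∈ pathEdges p → e ∉ pathEdges q

section helpers
variable {V : Type*}

lemma pathEdges_map_snd (p : List V) : (pathEdges p).map Prod.snd = p.tail := by
  apply List.map_snd_zip
  simp [List.length_tail]

lemma pathEdges_map_fst : ∀ (p : List V), (pathEdges p).map Prod.fst = p.dropLast
  | [] => rfl
  | [a] => rfl
  | a :: b :: l => by
    have ih := pathEdges_map_fst (b :: l)
    simp [pathEdges, List.zip_cons_cons] at ih ⊢
    exact ih

lemma mem_pathEdges_rel {R : V → V → Prop} :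
    ∀ (p : List V), List.Chain' R p → ∀ e ∈ pathEdges p, R e.1 e.2
  | [], _, e, he => by simp [pathEdges] at he
  | [a], _, e, he => by simp [pathEdges] at he
  | a :: b :: l, h, e, he => by
    change List.IsChain R (a :: b :: l) at h
    rw [List.isChain_cons_cons] at h
    simp only [pathEdges, List.tail_cons, List.zip_cons_cons, List.mem_cons] at he
    rcases he with rfl | he
    · exact h.1
    · exact mem_pathEdges_rel (b :: l) h.2 e he

lemma sum_in [Fintype V] [DecidableEq V] (p : List V) (h : p.Nodup) (x : V) :
    ∑ u : V, (if (u, x) ∈ pathEdges p then (1:ℕ) else 0) = if x ∈ p.tail then 1 else 0 := by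
  by_cases hx : x ∈ p.tail
  · rw [if_pos hx]
    rw [← pathEdges_map_snd p] at hx
    obtain ⟨e, he, he2⟩ := List.mem_map.1 hx
    have hex : (e.1, x) ∈ pathEdges p := by rwa [← he2, Prod.mk.eta]
    rw [Finset.sum_eq_single e.1]
    · rw [if_pos hex]
    · intro b _ hb
      rw [if_neg]
      intro hbe
      have hnd : (pathEdges p).map Prod.snd |>.Nodup := by
        rw [pathEdges_map_snd]; exact h.tail
      have := List.inj_on_of_nodup_map hnd hbe hex rfl
      exact hb (congrArg Prod.fst this)
    · intro hb; exact absurd (Finset.mem_univ _) hb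
  · rw [if_neg hx]
    apply Finset.sum_eq_zero
    intro u _
    rw [if_neg]
    intro hu
    exact hx (by rw [← pathEdges_map_snd p]; exact List.mem_map.2 ⟨_, hu, rfl⟩)

lemma sum_out [Fintype V] [DecidableEq V] (p : List V) (h : p.Nodup) (x : V) :
    ∑ w : V, (if (x, w) ∈ pathEdges p then (1:ℕ) else 0) = if x ∈ p.dropLast then 1 else 0 := by
  by_cases hx : x ∈ p.dropLast
  · rw [if_pos hx]
    rw [← pathEdges_map_fst p] at hx
    obtain ⟨e, he, he1⟩ := List.mem_map.1 hx
    have hex : (x, e.2) ∈ pathEdges p := by rwa [← he1, Prod.mk.eta]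
    rw [Finset.sum_eq_single e.2]
    · rw [if_pos hex]
    · intro b _ hb
      rw [if_neg]
      intro hbe
      have hnd : (pathEdges p).map Prod.fst |>.Nodup := by
        rw [pathEdges_map_fst]; exact h.sublist (List.dropLast_sublist p)
      have := List.inj_on_of_nodup_map hnd hbe hex rfl
      exact hb (congrArg Prod.snd this)
    · intro hb; exact absurd (Finset.mem_univ _) hb
  · rw [if_neg hx]
    apply Finset.sum_eq_zero
    intro u _
    rw [if_neg]
    intro hu
    exact hx (by rw [← pathEdges_map_fst p]; exact List.mem_map.2 ⟨_, hu, rfl⟩)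

lemma mem_tail_iff_aux (p : List V) (s : V) (hs : p.head? = some s)
    (x : V) (hx : x ≠ s) : x ∈ p.tail ↔ x ∈ p := by
  cases p with
  | nil => simp at hs
  | cons a l =>
    simp only [List.head?_cons, Option.some.injEq] at hs
    subst hs
    simp [List.mem_cons, hx]

lemma mem_dropLast_iff_aux (p : List V) (hnd : p.Nodup) (t : V) (ht : p.getLast? = some t)
    (x : V) (hx : x ≠ t) : x ∈ p.dropLast ↔ x ∈ p := by
  have hne : p ≠ [] := by rintro rfl; simp at ht
  have hlast : p.getLast hne = t := by
    rw [List.getLast?_eq_getLast hne] at ht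
    exact Option.some_inj.1 ht
  have hp : p.dropLast ++ [t] = p := by
    rw [← hlast]; exact List.dropLast_append_getLast hne
  constructor
  · intro h; rw [← hp]; exact List.mem_append_left _ h
  · intro h
    rw [← hp] at h
    rcases List.mem_append.1 h with h | h
    · exact h
    · simp only [List.mem_singleton] at h; exact absurd h hx

lemma head_mem_dropLast (p : List V) (s t : V) (hs : p.head? = some s)
    (ht : p.getLast? = some t) (hst : s ≠ t) : s ∈ p.dropLast := by
  cases p with
  | nil => simp at hs
  | cons a l =>
    simp only [List.head?_cons, Option.some.injEq] at hs
    subst hs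
    cases l with
    | nil =>
      simp only [List.getLast?_singleton, Option.some.injEq] at ht
      exact absurd ht hst
    | cons b l' => simp

lemma head_not_mem_tail (p : List V) (hnd : p.Nodup) (s : V) (hs : p.head? = some s) :
    s ∉ p.tail := by
  cases p with
  | nil => simp
  | cons a l =>
    simp only [List.head?_cons, Option.some.injEq] at hs
    subst hs
    exact (List.nodup_cons.1 hnd).1

end helpers

/-- Given `k` pairwise edge-disjoint vertex-simple directed paths from
`s` to `t`, the indicator function `f` of their edges is a unit-capacity flow: it is
zero off the edge set, bounded by `1`, conserved at every vertex other than `s` and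
`t`, and has value `k` (expressed as `Σ_v f(s,v) = Σ_v f(v,s) + k`). -/
theorem paths_give_flow {V : Type*} [Fintype V] [DecidableEq V]
    (E : Set (V × V)) (s t : V) (hst : s ≠ t)
    (k : ℕ) (P : Fin k → List V)
    (hP : ∀ m, IsPathFromTo E (P m) s t)
    (hnodup : ∀ m, (P m).Nodup)
    (hdisj : ∀ m m', m ≠ m' → EdgeDisjoint (P m) (P m'))
    (f : V × V → ℕ)
    (hf : ∀ e : V × V, f e = if ∃ m, e ∈ pathEdges (P m) then 1 else 0) :
    (∀ u w : V, (u, w) ∉ E → f (u, w) = 0) ∧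
    (∀ u w : V, f (u, w) ≤ 1) ∧
    (∀ x : V, x ≠ s → x ≠ t → ∑ u, f (u, x) = ∑ w, f (x, w)) ∧
    ∑ x, f (s, x) = ∑ x, f (x, s) + k := by
  have hfe : ∀ e : V × V, f e = ∑ m, if e ∈ pathEdges (P m) then (1:ℕ) else 0 := by
    intro e
    rw [hf]
    by_cases h : ∃ m, e ∈ pathEdges (P m)
    · obtain ⟨m0, hm0⟩ := h
      rw [if_pos ⟨m0, hm0⟩]
      symm
      rw [Finset.sum_eq_single m0]
      · rw [if_pos hm0]
      · intro m _ hm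
        exact if_neg (hdisj m0 m (Ne.symm hm) e hm0)
      · intro hb; exact absurd (Finset.mem_univ _) hb
    · rw [if_neg h]
      push_neg at h
      exact (Finset.sum_eq_zero fun m _ => if_neg (h m)).symm
  refine ⟨?_, ?_, ?_, ?_⟩
  · intro u w hE
    rw [hf, if_neg]
    rintro ⟨m, hm⟩
    exact hE (mem_pathEdges_rel (P m) (hP m).1.2 _ hm)
  · intro u w
    rw [hf]
    split <;> simp
  · intro x hxs hxt
    simp only [hfe]
    rw [Finset.sum_comm, Finset.sum_comm (γ := V)]
    apply Finset.sum_congr rfl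
    intro m _
    rw [sum_in (P m) (hnodup m) x, sum_out (P m) (hnodup m) x]
    exact if_congr ((mem_tail_iff_aux (P m) s (hP m).2.1 x hxs).trans
      (mem_dropLast_iff_aux (P m) (hnodup m) t (hP m).2.2 x hxt).symm) rfl rfl
  · simp only [hfe]
    rw [Finset.sum_comm, Finset.sum_comm (γ := V)]
    have h1 : ∀ m : Fin k, ∑ x : V, (if (s, x) ∈ pathEdges (P m) then (1:ℕ) else 0) = 1 := by
      intro m
      rw [sum_out (P m) (hnodup m) s,
        if_pos (head_mem_dropLast (P m) s t (hP m).2.1 (hP m).2.2 hst)]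
    have h2 : ∀ m : Fin k, ∑ x : V, (if (x, s) ∈ pathEdges (P m) then (1:ℕ) else 0) = 0 := by
      intro m
      rw [sum_in (P m) (hnodup m) s,
        if_neg (head_not_mem_tail (P m) (hnodup m) s (hP m).2.1)]
    simp [h1, h2]
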